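/- Let T̄ = (T₁,…,T_d) and T̄′ = (T₁′,…,T_d′) be commuting d-tuples of bounded operators on complex Hilbert spaces H and H′ respectively. Then the Dirac operators D_T̄ and D_T̄′ are isomorphic if and only if there is a unitary operator U : H → H′ such that UT_k = T_k′U for every k = 1,…,d. -/

import Mathlib

noncomputable section
open ContinuousLinearMap

abbrev Fock (d : ℕ) := EuclideanSpace ℂ (Finset (Fin d))

def createL (d : ℕ) (k : Fin d) : Fock d →ₗ[ℂ] Fock d where
  toFun f := WithLp.toLp 2 fun S =>
    if k ∈ S then ((-1 : ℂ) ^ (S.filter (fun j => j < k)).card) * f (S.erase k) else 0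
  map_add' f g := by
    ext S; by_cases h : k ∈ S <;> simp [h, PiLp.add_apply, mul_add]
  map_smul' c f := by
    ext S; by_cases h : k ∈ S <;> simp [h, PiLp.smul_apply, smul_eq_mul] <;> ring

def create (d : ℕ) (k : Fin d) : Fock d →L[ℂ] Fock d :=
  LinearMap.toContinuousLinearMap (createL d k)

def C0 (d : ℕ) : EuclideanSpace ℂ (Fin d) →ₗ[ℂ] (Fock d →L[ℂ] Fock d) where
  toFun z := ∑ k, z k • create d k
  map_add' z w := by
    rw [← Finset.sum_add_distrib]
    exact Finset.sum_congr rfl fun k _ => add_smul (z k : ℂ) (w k) (create d k)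
  map_smul' c z := by
    show ∑ k, (c • z) k • create d k = c • ∑ k, z k • create d k
    rw [Finset.smul_sum]
    refine Finset.sum_congr rfl fun k _ => ?_
    rw [PiLp.smul_apply, smul_eq_mul, smul_smul]

abbrev FockH (H : Type*) [NormedAddCommGroup H] [InnerProductSpace ℂ H] (d : ℕ) :=
  PiLp 2 (fun _ : Finset (Fin d) => H)

def tensorOp {H : Type*} [NormedAddCommGroup H] [InnerProductSpace ℂ H] {d : ℕ}
    (T : H →L[ℂ] H) (A : Fock d →L[ℂ] Fock d) : FockH H d →L[ℂ] FockH H d :=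
  ((PiLp.continuousLinearEquiv 2 ℂ (fun _ : Finset (Fin d) => H)).symm :
      (∀ _ : Finset (Fin d), H) →L[ℂ] FockH H d) ∘L
    (ContinuousLinearMap.pi fun S : Finset (Fin d) =>
      ∑ S' : Finset (Fin d), (A (EuclideanSpace.single S' 1) S) •
        (T ∘L ContinuousLinearMap.proj S')) ∘L
    ((PiLp.continuousLinearEquiv 2 ℂ (fun _ : Finset (Fin d) => H)) :
      FockH H d →L[ℂ] (∀ _ : Finset (Fin d), H))

variable {H : Type*} [NormedAddCommGroup H] [InnerProductSpace ℂ H] [CompleteSpace H]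

instance fockHComplete {d : ℕ} : CompleteSpace (FockH H d) :=
  inferInstanceAs (CompleteSpace (PiLp 2 (fun _ : Finset (Fin d) => H)))

/-- The Koszul coboundary operator `B = T₁⊗c₁ + ⋯ + T_d⊗c_d` on `H ⊗ Λℂ^d`. -/
def DiracB {d : ℕ} (T : Fin d → H →L[ℂ] H) : FockH H d →L[ℂ] FockH H d :=
  ∑ k, tensorOp (T k) (create d k)

/-- The Dirac operator `D = B + B*` of a commuting `d`-tuple. -/
def DiracD {d : ℕ} (T : Fin d → H →L[ℂ] H) : FockH H d →L[ℂ] FockH H d :=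
  DiracB T + adjoint (DiracB T)

/-- `C(z) = 1_H ⊗ C₀(z)` on `H ⊗ Λℂ^d`. -/
def Cop (H : Type*) [NormedAddCommGroup H] [InnerProductSpace ℂ H] (d : ℕ)
    (z : EuclideanSpace ℂ (Fin d)) : FockH H d →L[ℂ] FockH H d :=
  tensorOp (1 : H →L[ℂ] H) (C0 d z)

/-- The canonical Clifford structure `R(z) = C(z) + C(z)*` on `H ⊗ Λℂ^d`. -/
def Rop (H : Type*) [NormedAddCommGroup H] [InnerProductSpace ℂ H] [CompleteSpace H] (d : ℕ)
    (z : EuclideanSpace ℂ (Fin d)) : FockH H d →L[ℂ] FockH H d :=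
  Cop H d z + adjoint (Cop H d z)

open ContinuousLinearMap

lemma tensorOp_apply {d : ℕ} (T : H →L[ℂ] H) (A : Fock d →L[ℂ] Fock d)
    (ξ : FockH H d) (S : Finset (Fin d)) :
    tensorOp T A ξ S = ∑ S' : Finset (Fin d), (A (EuclideanSpace.single S' 1) S) • T (ξ S') := by
  simp [tensorOp, ContinuousLinearMap.sum_apply]

lemma fock_apply_eq_inner {d : ℕ} (v : Fock d) (S : Finset (Fin d)) :
    v S = inner ℂ (EuclideanSpace.single S (1:ℂ)) v := by
  simp [EuclideanSpace.inner_single_left]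

lemma entry_adjoint {d : ℕ} (A : Fock d →L[ℂ] Fock d) (S S' : Finset (Fin d)) :
    adjoint A (EuclideanSpace.single S' 1) S
      = starRingEnd ℂ (A (EuclideanSpace.single S 1) S') := by
  rw [fock_apply_eq_inner (adjoint A _) S, ContinuousLinearMap.adjoint_inner_right,
    ← inner_conj_symm, ← fock_apply_eq_inner]

lemma adjoint_tensorOp {d : ℕ} (T : H →L[ℂ] H) (A : Fock d →L[ℂ] Fock d) :
    adjoint (tensorOp T A) = tensorOp (adjoint T) (adjoint A) := by
  symm
  rw [ContinuousLinearMap.eq_adjoint_iff]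
  intro x y
  simp only [PiLp.inner_apply, tensorOp_apply, sum_inner, inner_sum, inner_smul_left,
    inner_smul_right, entry_adjoint, ContinuousLinearMap.adjoint_inner_left,
    RingHom.id_apply, starRingEnd_self_apply]
  rw [Finset.sum_comm]
lemma create_entry {d : ℕ} (k : Fin d) (S S' : Finset (Fin d)) :
    create d k (EuclideanSpace.single S' 1) S
      = if k ∈ S ∧ S.erase k = S' then ((-1:ℂ) ^ (S.filter (fun j => j < k)).card) else 0 := by
  simp only [create, LinearMap.coe_toContinuousLinearMap', createL, LinearMap.coe_mk,
    AddHom.coe_mk]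
  by_cases h : k ∈ S
  · simp [h, EuclideanSpace.single_apply]
  · simp [h]

lemma tensorOp_create_apply {d : ℕ} (T : H →L[ℂ] H) (k : Fin d) (ξ : FockH H d)
    (S : Finset (Fin d)) :
    tensorOp T (create d k) ξ S
      = if k ∈ S then ((-1:ℂ) ^ (S.filter (fun j => j < k)).card) • T (ξ (S.erase k)) else 0 := by
  rw [tensorOp_apply]
  by_cases h : k ∈ S
  · simp [h, create_entry, ite_smul]
  · simp [h, create_entry]
lemma tensorOp_acreate_apply {d : ℕ} (T : H →L[ℂ] H) (k : Fin d) (ξ : FockH H d)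
    (S : Finset (Fin d)) :
    tensorOp T (adjoint (create d k)) ξ S
      = if k ∈ S then 0
        else ((-1:ℂ) ^ ((insert k S).filter (fun j => j < k)).card) • T (ξ (insert k S)) := by
  rw [tensorOp_apply]
  have hentry : ∀ S' : Finset (Fin d),
      adjoint (create d k) (EuclideanSpace.single S' 1) S
        = if k ∈ S' ∧ S'.erase k = S then ((-1:ℂ) ^ (S'.filter (fun j => j < k)).card) else 0 := by
    intro S'
    rw [entry_adjoint, create_entry]
    split <;> simp
  by_cases h : k ∈ S
  · rw [Finset.sum_eq_zero, if_pos h]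
    intro S' _
    rw [hentry]
    have : ¬ (k ∈ S' ∧ S'.erase k = S) := by
      rintro ⟨h1, h2⟩
      exact (Finset.notMem_erase k S') (h2 ▸ h)
    simp [this]
  · rw [if_neg h, Finset.sum_eq_single (insert k S)]
    · rw [hentry]
      simp [Finset.erase_insert h]
    · intro S' _ hne
      rw [hentry]
      have : ¬ (k ∈ S' ∧ S'.erase k = S) := by
        rintro ⟨h1, h2⟩
        exact hne (by rw [← h2, Finset.insert_erase h1])
      simp [this]
    · intro h'; exact absurd (Finset.mem_univ _) h'
lemma fock_ext {d : ℕ} {v w : FockH H d} (h : ∀ S, v S = w S) : v = w := PiLp.ext h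

lemma fock_sum_apply {d : ℕ} {ι : Type*} (s : Finset ι) (f : ι → FockH H d)
    (S : Finset (Fin d)) : (∑ i ∈ s, f i) S = ∑ i ∈ s, f i S := by
  classical
  induction s using Finset.cons_induction with
  | empty => rfl
  | cons a s ha ih => rw [Finset.sum_cons, Finset.sum_cons, ← ih]; rfl

lemma EkEk_apply {d : ℕ} (k : Fin d) (ξ : FockH H d) (S : Finset (Fin d)) :
    tensorOp (1 : H →L[ℂ] H) (create d k)
      (tensorOp (1 : H →L[ℂ] H) (adjoint (create d k)) ξ) S
      = if k ∈ S then ξ S else 0 := by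
  rw [tensorOp_create_apply]
  by_cases h : k ∈ S
  · rw [if_pos h, if_pos h, tensorOp_acreate_apply, if_neg (Finset.notMem_erase k S),
      Finset.insert_erase h]
    simp [smul_smul, ← mul_pow]
  · rw [if_neg h, if_neg h]

lemma number_apply {d : ℕ} (ξ : FockH H d) (S : Finset (Fin d)) :
    ∑ k : Fin d, tensorOp (1 : H →L[ℂ] H) (create d k)
      (tensorOp (1 : H →L[ℂ] H) (adjoint (create d k)) ξ) S
      = (S.card : ℕ) • ξ S := by
  simp only [EkEk_apply]
  rw [Finset.sum_ite_mem, Finset.univ_inter, Finset.sum_const]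
lemma intertwine_adjoint {K K' : Type*} [NormedAddCommGroup K] [InnerProductSpace ℂ K]
    [CompleteSpace K] [NormedAddCommGroup K'] [InnerProductSpace ℂ K'] [CompleteSpace K']
    (W : K ≃ₗᵢ[ℂ] K') (L : K →L[ℂ] K) (L' : K' →L[ℂ] K')
    (h : ∀ ξ, W (L ξ) = L' (W ξ)) (ξ : K) : W (adjoint L ξ) = adjoint L' (W ξ) := by
  apply ext_inner_left ℂ
  intro v
  have hv : v = W (W.symm v) := (W.apply_symm_apply v).symm
  rw [hv, W.inner_map_map, ContinuousLinearMap.adjoint_inner_right,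
    ContinuousLinearMap.adjoint_inner_right, ← W.inner_map_map (L (W.symm v)) ξ, h,
    W.apply_symm_apply]

/-- inclusion of `H` as the vacuum component. -/
def incl {d : ℕ} (x : H) : FockH H d := WithLp.toLp 2 fun S => if S = ∅ then x else 0

lemma incl_apply {d : ℕ} (x : H) (S : Finset (Fin d)) :
    (incl x : FockH H d) S = if S = ∅ then x else 0 := rfl
lemma adjoint_DiracB {d : ℕ} (T : Fin d → H →L[ℂ] H) :
    adjoint (DiracB T) = ∑ k, tensorOp (adjoint (T k)) (adjoint (create d k)) := by
  rw [DiracB, map_sum]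
  exact Finset.sum_congr rfl fun k _ => adjoint_tensorOp _ _

lemma aDiracB_incl {d : ℕ} (T : Fin d → H →L[ℂ] H) (x : H) :
    adjoint (DiracB T) (incl x : FockH H d) = 0 := by
  rw [adjoint_DiracB]
  apply fock_ext
  intro S
  rw [ContinuousLinearMap.sum_apply, fock_sum_apply]
  have : ∀ k : Fin d, tensorOp (adjoint (T k)) (adjoint (create d k)) (incl x : FockH H d) S = 0 := by
    intro k
    rw [tensorOp_acreate_apply]
    by_cases h : k ∈ S
    · simp [h]
    · rw [if_neg h, incl_apply, if_neg (Finset.insert_ne_empty k S)]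
      simp
  simp [this]

lemma DiracD_incl {d : ℕ} (T : Fin d → H →L[ℂ] H) (x : H) :
    DiracD T (incl x : FockH H d) = DiracB T (incl x) := by
  rw [DiracD, ContinuousLinearMap.add_apply, aDiracB_incl, add_zero]

lemma DiracB_incl_singleton {d : ℕ} (T : Fin d → H →L[ℂ] H) (x : H) (k : Fin d) :
    DiracB T (incl x : FockH H d) {k} = T k x := by
  rw [DiracB, ContinuousLinearMap.sum_apply, fock_sum_apply, Finset.sum_eq_single k]
  · rw [tensorOp_create_apply, if_pos (Finset.mem_singleton_self _)]
    simp [incl_apply, Finset.filter_singleton]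
  · intro j _ hj
    rw [tensorOp_create_apply, if_neg (by simp [hj])]
  · intro h'; exact absurd (Finset.mem_univ _) h'

lemma DiracB_incl_nonsingleton {d : ℕ} (T : Fin d → H →L[ℂ] H) (x : H) (S : Finset (Fin d))
    (h : ¬ ∃ k : Fin d, S = {k}) : DiracB T (incl x : FockH H d) S = 0 := by
  rw [DiracB, ContinuousLinearMap.sum_apply, fock_sum_apply]
  apply Finset.sum_eq_zero
  intro k _
  rw [tensorOp_create_apply]
  by_cases hk : k ∈ S
  · rw [if_pos hk, incl_apply, if_neg, map_zero, smul_zero]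
    intro he
    exact h ⟨k, by rw [← Finset.insert_erase hk, he]; rfl⟩
  · rw [if_neg hk]
lemma K1 {d : ℕ} (T : Fin d → H →L[ℂ] H) (x : H) (k : Fin d) :
    tensorOp (1 : H →L[ℂ] H) (adjoint (create d k)) (DiracD T (incl x : FockH H d))
      = incl (T k x) := by
  rw [DiracD_incl]
  apply fock_ext
  intro S
  rw [tensorOp_acreate_apply, incl_apply]
  by_cases hk : k ∈ S
  · rw [if_pos hk, if_neg (by rintro rfl; exact Finset.notMem_empty k hk)]
  · rw [if_neg hk]
    by_cases hS : S = ∅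
    · subst hS
      rw [if_pos rfl]
      have : insert k (∅ : Finset (Fin d)) = {k} := rfl
      rw [this, DiracB_incl_singleton]
      simp [Finset.filter_singleton]
    · rw [if_neg hS, DiracB_incl_nonsingleton, map_zero, smul_zero]
      rintro ⟨j, hj⟩
      have hkj : k = j := by
        have := Finset.mem_insert_self k S
        rw [hj, Finset.mem_singleton] at this
        exact this
      subst hkj
      apply hS
      have hsub : S ⊆ {k} := hj ▸ Finset.subset_insert k S
      rcases Finset.subset_singleton_iff.mp hsub with h | h
      · exact h
      · exact absurd (h ▸ Finset.mem_singleton_self k) hk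
lemma C0_single {d : ℕ} (k : Fin d) :
    C0 d (EuclideanSpace.single k (1:ℂ)) = create d k := by
  show ∑ j, (EuclideanSpace.single k (1:ℂ)) j • create d j = create d k
  rw [Finset.sum_eq_single k]
  · simp [EuclideanSpace.single_apply]
  · intro j _ hj
    simp only [EuclideanSpace.single_apply, if_neg hj]
    exact zero_smul ℂ (create d j)
  · intro h'; exact absurd (Finset.mem_univ _) h'

lemma Cop_single {d : ℕ} (k : Fin d) :
    Cop H d (EuclideanSpace.single k (1:ℂ)) = tensorOp 1 (create d k) := by
  rw [Cop, C0_single]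

lemma tensorOp_smul_right {d : ℕ} (T : H →L[ℂ] H) (c : ℂ) (A : Fock d →L[ℂ] Fock d) :
    tensorOp T (c • A) = c • tensorOp T A := by
  ext ξ S
  rw [ContinuousLinearMap.smul_apply, PiLp.smul_apply, tensorOp_apply, tensorOp_apply,
    Finset.smul_sum]
  refine Finset.sum_congr rfl fun S' _ => ?_
  rw [ContinuousLinearMap.smul_apply, PiLp.smul_apply, smul_eq_mul, mul_smul]

lemma Cop_smul {d : ℕ} (c : ℂ) (z : EuclideanSpace ℂ (Fin d)) :
    Cop H d (c • z) = c • Cop H d z := by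
  rw [Cop, Cop, map_smul, tensorOp_smul_right]
lemma adjoint_smul' {K K' : Type*} [NormedAddCommGroup K] [InnerProductSpace ℂ K]
    [CompleteSpace K] [NormedAddCommGroup K'] [InnerProductSpace ℂ K'] [CompleteSpace K']
    (c : ℂ) (A : K →L[ℂ] K') :
    adjoint (c • A) = (starRingEnd ℂ c) • adjoint A :=
  LinearIsometryEquiv.map_smulₛₗ ContinuousLinearMap.adjoint c A

lemma recover_C {d : ℕ} {H' : Type*} [NormedAddCommGroup H'] [InnerProductSpace ℂ H']
    [CompleteSpace H'] (W : FockH H d ≃ₗᵢ[ℂ] FockH H' d)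
    (hR : ∀ z ξ, W (Rop H d z ξ) = Rop H' d z (W ξ)) (z : EuclideanSpace ℂ (Fin d))
    (ξ : FockH H d) : W (Cop H d z ξ) = Cop H' d z (W ξ) := by
  have h1 := hR z ξ
  have h2 := hR (Complex.I • z) ξ
  simp only [Rop, Cop_smul, adjoint_smul', Complex.conj_I, ContinuousLinearMap.add_apply,
    ContinuousLinearMap.smul_apply, ContinuousLinearMap.neg_apply, map_add, map_smul,
    map_neg, neg_smul] at h1 h2
  have h3 := congrArg (fun v => (-Complex.I) • v) h2
  simp only [smul_add, smul_neg, smul_smul, neg_mul, mul_neg, Complex.I_mul_I, neg_neg,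
    one_smul, neg_smul] at h3
  have h4 : (2:ℂ) • W (Cop H d z ξ) = (2:ℂ) • Cop H' d z (W ξ) := by
    linear_combination (norm := module) h1 + h3
  exact smul_right_injective _ (two_ne_zero) h4
lemma vac_supported {d : ℕ} {H' : Type*} [NormedAddCommGroup H'] [InnerProductSpace ℂ H']
    [CompleteSpace H'] (W : FockH H d ≃ₗᵢ[ℂ] FockH H' d)
    (hE : ∀ (k : Fin d) ξ, W (tensorOp 1 (create d k) ξ) = tensorOp 1 (create d k) (W ξ))
    (hEa : ∀ (k : Fin d) ξ, W (tensorOp 1 (adjoint (create d k)) ξ)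
      = tensorOp 1 (adjoint (create d k)) (W ξ))
    (ξ : FockH H d) (hξ : ∀ S, S ≠ ∅ → ξ S = 0) :
    ∀ S, S ≠ ∅ → (W ξ) S = 0 := by
  intro S hS
  have hterm : ∀ k : Fin d, tensorOp (1 : H' →L[ℂ] H') (create d k)
      (tensorOp 1 (adjoint (create d k)) (W ξ)) S = 0 := by
    intro k
    rw [← hEa k ξ, ← hE k _]
    have hz : tensorOp (1 : H →L[ℂ] H) (create d k) (tensorOp 1 (adjoint (create d k)) ξ)
        = 0 := by
      apply fock_ext
      intro S'
      rw [EkEk_apply]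
      by_cases h : k ∈ S'
      · rw [if_pos h]
        exact hξ S' (by rintro rfl; exact Finset.notMem_empty k h)
      · rw [if_neg h]; rfl
    rw [hz, map_zero]; rfl
  have hnum := number_apply (W ξ) S
  rw [Finset.sum_congr rfl (fun k _ => hterm k), Finset.sum_const_zero] at hnum
  have hcast : (S.card : ℂ) • (W ξ) S = 0 := by
    rw [Nat.cast_smul_eq_nsmul, ← hnum]
  rcases smul_eq_zero.mp hcast with h | h
  · exact absurd (Nat.cast_eq_zero.mp h) (by
      simpa [Finset.card_eq_zero] using hS)
  · exact h
lemma adjoint_one' : adjoint (1 : H →L[ℂ] H) = 1 :=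
  ContinuousLinearMap.adjoint_id

lemma incl_add {d : ℕ} (x y : H) : (incl (x + y) : FockH H d) = incl x + incl y := by
  apply fock_ext
  intro S
  rw [PiLp.add_apply, incl_apply, incl_apply, incl_apply]
  split <;> simp

lemma incl_smul {d : ℕ} (c : ℂ) (x : H) : (incl (c • x) : FockH H d) = c • incl x := by
  apply fock_ext
  intro S
  rw [PiLp.smul_apply, incl_apply, incl_apply]
  split <;> simp

lemma incl_ne {d : ℕ} (x : H) {S : Finset (Fin d)} (h : S ≠ ∅) :
    (incl x : FockH H d) S = 0 := by
  rw [incl_apply, if_neg h]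

lemma inner_incl {d : ℕ} (x y : H) :
    (inner ℂ (incl x : FockH H d) (incl y : FockH H d) : ℂ) = inner ℂ x y := by
  rw [PiLp.inner_apply, Finset.sum_eq_single (∅ : Finset (Fin d))]
  · rfl
  · intro S _ hS
    rw [incl_ne x hS, inner_zero_left]
  · intro h'; exact absurd (Finset.mem_univ _) h'
section backward
variable {d : ℕ} {H' : Type*} [NormedAddCommGroup H'] [InnerProductSpace ℂ H']
  [CompleteSpace H']

/-- The unitary `U ⊗ 1` on the full space, acting componentwise. -/
def Wof (U : H ≃ₗᵢ[ℂ] H') (d : ℕ) : FockH H d ≃ₗᵢ[ℂ] FockH H' d :=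
  LinearIsometryEquiv.piLpCongrRight 2 (fun _ : Finset (Fin d) => U)

lemma Wof_apply (U : H ≃ₗᵢ[ℂ] H') (ξ : FockH H d) (S : Finset (Fin d)) :
    Wof U d ξ S = U (ξ S) := rfl

lemma Wof_tensorOp (U : H ≃ₗᵢ[ℂ] H') (R : H →L[ℂ] H) (R' : H' →L[ℂ] H')
    (hR : ∀ x, U (R x) = R' (U x)) (A : Fock d →L[ℂ] Fock d) (ξ : FockH H d) :
    Wof U d (tensorOp R A ξ) = tensorOp R' A (Wof U d ξ) := by
  apply fock_ext
  intro S
  rw [Wof_apply, tensorOp_apply, tensorOp_apply, map_sum]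
  refine Finset.sum_congr rfl fun S' _ => ?_
  rw [map_smul, hR, Wof_apply]

lemma Wof_DiracB (U : H ≃ₗᵢ[ℂ] H') (T : Fin d → H →L[ℂ] H) (T' : Fin d → H' →L[ℂ] H')
    (hU : ∀ k x, U (T k x) = T' k (U x)) (ξ : FockH H d) :
    Wof U d (DiracB T ξ) = DiracB T' (Wof U d ξ) := by
  rw [DiracB, DiracB, ContinuousLinearMap.sum_apply, ContinuousLinearMap.sum_apply, map_sum]
  exact Finset.sum_congr rfl fun k _ => Wof_tensorOp U (T k) (T' k) (hU k) _ ξ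

lemma Wof_DiracD (U : H ≃ₗᵢ[ℂ] H') (T : Fin d → H →L[ℂ] H) (T' : Fin d → H' →L[ℂ] H')
    (hU : ∀ k x, U (T k x) = T' k (U x)) (ξ : FockH H d) :
    Wof U d (DiracD T ξ) = DiracD T' (Wof U d ξ) := by
  rw [DiracD, DiracD, ContinuousLinearMap.add_apply, ContinuousLinearMap.add_apply, map_add,
    Wof_DiracB U T T' hU, intertwine_adjoint (Wof U d) _ _ (Wof_DiracB U T T' hU)]

lemma Wof_Rop (U : H ≃ₗᵢ[ℂ] H') (z : EuclideanSpace ℂ (Fin d)) (ξ : FockH H d) :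
    Wof U d (Rop H d z ξ) = Rop H' d z (Wof U d ξ) := by
  have hC : ∀ η, Wof U d (Cop H d z η) = Cop H' d z (Wof U d η) := fun η =>
    Wof_tensorOp U 1 1 (fun x => rfl) (C0 d z) η
  rw [Rop, Rop, ContinuousLinearMap.add_apply, ContinuousLinearMap.add_apply, map_add, hC,
    intertwine_adjoint (Wof U d) _ _ hC]

end backward
/-- **Theorem A, uniqueness.** The Dirac operators of two commuting
`d`-tuples are isomorphic iff the tuples are unitarily equivalent. -/
theorem arveson_stmt11 {d : ℕ} {H' : Type*} [NormedAddCommGroup H'] [InnerProductSpace ℂ H']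
    [CompleteSpace H'] (T : Fin d → H →L[ℂ] H) (T' : Fin d → H' →L[ℂ] H')
    (hT : ∀ i j, T i * T j = T j * T i) (hT' : ∀ i j, T' i * T' j = T' j * T' i) :
    (∃ W : FockH H d ≃ₗᵢ[ℂ] FockH H' d,
        (∀ ξ, W (DiracD T ξ) = DiracD T' (W ξ)) ∧
        (∀ z ξ, W (Rop H d z ξ) = Rop H' d z (W ξ))) ↔
    (∃ U : H ≃ₗᵢ[ℂ] H', ∀ k ξ, U (T k ξ) = T' k (U ξ)) := by
  constructor
  · rintro ⟨W, hD, hRop⟩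
    have hC := recover_C W hRop
    have hCa : ∀ z ξ, W (adjoint (Cop H d z) ξ) = adjoint (Cop H' d z) (W ξ) :=
      fun z => intertwine_adjoint W _ _ (hC z)
    have hE : ∀ (k : Fin d) ξ, W (tensorOp 1 (create d k) ξ)
        = tensorOp 1 (create d k) (W ξ) := by
      intro k ξ
      have := hC (EuclideanSpace.single k 1) ξ
      rwa [Cop_single, Cop_single] at this
    have hEa : ∀ (k : Fin d) ξ, W (tensorOp 1 (adjoint (create d k)) ξ)
        = tensorOp 1 (adjoint (create d k)) (W ξ) := by
      intro k ξ
      have := hCa (EuclideanSpace.single k 1) ξ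
      rwa [Cop_single, Cop_single, adjoint_tensorOp, adjoint_tensorOp, adjoint_one', adjoint_one'] at this
    have hE' : ∀ (k : Fin d) ξ, W.symm (tensorOp 1 (create d k) ξ)
        = tensorOp 1 (create d k) (W.symm ξ) := by
      intro k ξ
      apply W.injective
      rw [hE, W.apply_symm_apply, W.apply_symm_apply]
    have hEa' : ∀ (k : Fin d) ξ, W.symm (tensorOp 1 (adjoint (create d k)) ξ)
        = tensorOp 1 (adjoint (create d k)) (W.symm ξ) := by
      intro k ξ
      apply W.injective
      rw [hEa, W.apply_symm_apply, W.apply_symm_apply]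
    -- the candidate unitary and its inverse
    have hWsupp : ∀ (x : H) (S : Finset (Fin d)), S ≠ ∅ → W (incl x) S = 0 := fun x =>
      vac_supported W hE hEa (incl x) (fun S hS => incl_ne x hS)
    have hWsupp' : ∀ (y : H') (S : Finset (Fin d)), S ≠ ∅ → W.symm (incl y) S = 0 := fun y =>
      vac_supported W.symm hE' hEa' (incl y) (fun S hS => incl_ne y hS)
    have hWincl : ∀ x : H, (incl (W (incl x) ∅) : FockH H' d) = W (incl x) := by
      intro x
      apply fock_ext
      intro S
      by_cases hS : S = ∅
      · subst hS; rfl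
      · rw [incl_ne _ hS, hWsupp x S hS]
    have hWincl' : ∀ y : H', (incl (W.symm (incl y) ∅) : FockH H d) = W.symm (incl y) := by
      intro y
      apply fock_ext
      intro S
      by_cases hS : S = ∅
      · subst hS; rfl
      · rw [incl_ne _ hS, hWsupp' y S hS]
    let Umap : H →ₗ[ℂ] H' :=
      { toFun := fun x => W (incl x) ∅
        map_add' := fun x y => by
          show W (incl (x + y)) ∅ = W (incl x) ∅ + W (incl y) ∅
          rw [incl_add, map_add, PiLp.add_apply]
        map_smul' := fun c x => by
          show W (incl (c • x)) ∅ = c • W (incl x) ∅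
          rw [incl_smul, map_smul, PiLp.smul_apply] }
    let Vmap : H' →ₗ[ℂ] H :=
      { toFun := fun y => W.symm (incl y) ∅
        map_add' := fun x y => by
          show W.symm (incl (x + y)) ∅ = W.symm (incl x) ∅ + W.symm (incl y) ∅
          rw [incl_add, map_add, PiLp.add_apply]
        map_smul' := fun c x => by
          show W.symm (incl (c • x)) ∅ = c • W.symm (incl x) ∅
          rw [incl_smul, map_smul, PiLp.smul_apply] }
    have hUV : ∀ y : H', Umap (Vmap y) = y := by
      intro y
      show W (incl (W.symm (incl y) ∅)) ∅ = y
      rw [hWincl', W.apply_symm_apply]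
      rfl
    have hVU : ∀ x : H, Vmap (Umap x) = x := by
      intro x
      show W.symm (incl (W (incl x) ∅)) ∅ = x
      rw [hWincl, W.symm_apply_apply]
      rfl
    let Ueq : H ≃ₗ[ℂ] H' := LinearEquiv.ofLinear Umap Vmap
      (LinearMap.ext hUV) (LinearMap.ext hVU)
    have hinner : ∀ x y : H, (inner ℂ (Ueq x) (Ueq y) : ℂ) = inner ℂ x y := by
      intro x y
      show (inner ℂ (W (incl x) ∅) (W (incl y) ∅) : ℂ) = inner ℂ x y
      have h1 : (inner ℂ (W (incl x)) (W (incl y)) : ℂ) = inner ℂ (incl x : FockH H d) (incl y) :=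
        W.inner_map_map _ _
      rw [inner_incl] at h1
      rw [← h1, PiLp.inner_apply, Finset.sum_eq_single (∅ : Finset (Fin d))]
      · intro S _ hS
        rw [hWsupp x S hS, inner_zero_left]
      · intro h'; exact absurd (Finset.mem_univ _) h'
    refine ⟨Ueq.isometryOfInner hinner, ?_⟩
    intro k x
    show Umap (T k x) = T' k (Umap x)
    show W (incl (T k x)) ∅ = T' k (W (incl x) ∅)
    have hK1' : incl (T' k (W (incl x) ∅)) =
        tensorOp (1 : H' →L[ℂ] H') (adjoint (create d k)) (DiracD T' (incl (W (incl x) ∅))) :=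
      (K1 T' (W (incl x) ∅) k).symm
    rw [← K1 T x k, hEa, hD, ← hWincl x, ← hK1', incl_apply, if_pos rfl,
      incl_apply, if_pos rfl]
  · rintro ⟨U, hU⟩
    exact ⟨Wof U d, Wof_DiracD U T T' hU, Wof_Rop U⟩
end
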